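/- The wedge-annihilation filtration determined by any subspace of 1-cochains is stable under the Chevalley–Eilenberg differential: for any subspace W ⊆ g* and all integers p, n, d(F̃^pC^n(g)) ⊆ F̃^pC^{n+1}(g), where F̃^pC^n(g) = {ω ∈ C^n(g) : θ₁ ∧ ⋯ ∧ θ_{n+1−p} ∧ ω = 0 for all θ₁,…,θ_{n+1−p} ∈ W}. -/

import Mathlib

/-!
STATEMENT 7: The wedge-annihilation filtration determined by any subspace `W ⊆ g*` of
1-cochains is stable under the Chevalley–Eilenberg differential (trivial coefficients):
for all integers `p` and all `n`, `d(F̃^pC^n(g)) ⊆ F̃^pC^{n+1}(g)`, where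
`F̃^pC^n(g) = {ω ∈ C^n(g) : θ₁ ∧ ⋯ ∧ θ_{n+1−p} ∧ ω = 0 for all θ₁,…,θ_{n+1−p} ∈ W}`
(and `F̃^pC^n = 0` when `n+1−p < 0`).

Wedging a 1-form `θ` with an `n`-cochain `ω` is given by
`(θ ∧ ω)(X₀,…,X_n) = Σ_i (−1)^i θ(X_i) ω(X₀,…,X̂_i,…,X_n)`.
-/

open Finset

/-- The trivial-coefficient Chevalley–Eilenberg differential, at the level of functions. -/
def ceD0 {K : Type*} [Field K] {g : Type*} [LieRing g] [LieAlgebra K g] :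
    ∀ n : ℕ, ((Fin n → g) → K) → ((Fin (n + 1) → g) → K)
  | 0 => fun _ _ => 0
  | (m + 1) => fun ω X =>
      ∑ i : Fin (m + 2), ∑ j : Fin (m + 1),
        if (i : ℕ) ≤ (j : ℕ) then
          ((-1 : ℤ) ^ ((i : ℕ) + ((i.succAbove j : Fin (m + 2)) : ℕ))) •
            ω (Fin.cons ⁅X i, X (i.succAbove j)⁆ ((X ∘ i.succAbove) ∘ j.succAbove))
        else 0

/-- The wedge product of a 1-form with an `n`-cochain. -/
def wedge1 {K : Type*} [Field K] {g : Type*} [AddCommGroup g] [Module K g]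
    (θ : Module.Dual K g) {n : ℕ} (ω : (Fin n → g) → K) : (Fin (n + 1) → g) → K :=
  fun X => ∑ i : Fin (n + 1), ((-1 : K) ^ (i : ℕ)) * θ (X i) * ω (X ∘ i.succAbove)

/-- The iterated wedge product `θ₁ ∧ ⋯ ∧ θ_c ∧ ω` of a family of 1-forms with an
`n`-cochain. -/
def wedgeIter {K : Type*} [Field K] {g : Type*} [AddCommGroup g] [Module K g] :
    ∀ (c : ℕ), (Fin c → Module.Dual K g) → ∀ {n : ℕ},
      ((Fin n → g) → K) → ((Fin (n + c) → g) → K)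
  | 0, _, _, ω => ω
  | (c + 1), θ, _, ω => wedge1 (θ 0) (wedgeIter c (θ ∘ Fin.succ) ω)

/-- The wedge-annihilation filtration determined by a subspace `W ⊆ g*`:
`F̃^pC^n(g)` consists of the `n`-cochains killed by wedging with any `n+1−p`
elements of `W`. -/
def wFilt {K : Type*} [Field K] {g : Type*} [LieRing g] [LieAlgebra K g]
    (W : Submodule K (Module.Dual K g)) (p : ℤ) (n : ℕ) : Set ((Fin n → g) → K) :=
  if (n : ℤ) + 1 - p < 0 then {0}
  else {ω | ∀ m : ℕ, (m : ℤ) = (n : ℤ) + 1 - p →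
    ∀ θ : Fin m → Module.Dual K g, (∀ i, θ i ∈ W) → wedgeIter m θ ω = 0}

set_option linter.unusedSectionVars false
set_option maxHeartbeats 1000000

def finmk {k : ℕ} (m : ℕ) : Fin (k+1) := ⟨min m k, by omega⟩

@[simp] lemma finmk_val {k : ℕ} (m : ℕ) : ((finmk m : Fin (k+1)) : ℕ) = min m k := rfl

lemma np {K : Type*} [Monoid K] [HasDistribNeg K] {m n : ℕ} (h : m % 2 = n % 2) :
    (-1:K)^m = (-1:K)^n := by
  rw [← Nat.div_add_mod m 2, ← Nat.div_add_mod n 2, h, pow_add, pow_add, pow_mul, pow_mul,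
    neg_one_sq, one_pow, one_pow]

lemma tri {M : Type*} [AddCommMonoid M] {N : ℕ}
    (f : Fin (N+3) → Fin (N+2) → Fin (N+2) → M)
    (F : Fin (N+3) → Fin (N+3) → Fin (N+1) → M)
    (hc : ∀ (a : Fin (N+3)) (u v : Fin (N+2)), (u:ℕ) < (v:ℕ) →
      f a u v = F (finmk (if (u:ℕ) < (a:ℕ) then (u:ℕ) else (u:ℕ)+1))
                  (finmk (if (v:ℕ) < (a:ℕ) then (v:ℕ) else (v:ℕ)+1))
                  (finmk ((a:ℕ) - (if (u:ℕ) < (a:ℕ) then 1 else 0)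
                     - (if (v:ℕ) < (a:ℕ) then 1 else 0)))) :
    (∑ a : Fin (N+3), ∑ u : Fin (N+2), ∑ v : Fin (N+2), if (u:ℕ) < (v:ℕ) then f a u v else 0)
      = ∑ U : Fin (N+3), ∑ V : Fin (N+3),
          if (U:ℕ) < (V:ℕ) then (∑ b : Fin (N+1), F U V b) else 0 := by
  classical
  have L : (∑ a : Fin (N+3), ∑ u : Fin (N+2), ∑ v : Fin (N+2),
        if (u:ℕ) < (v:ℕ) then f a u v else 0)
      = ∑ x ∈ (univ.filter
          (fun x : Fin (N+3) × Fin (N+2) × Fin (N+2) => (x.2.1:ℕ) < (x.2.2:ℕ))),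
          f x.1 x.2.1 x.2.2 := by
    rw [Finset.sum_filter, Fintype.sum_prod_type]
    refine Finset.sum_congr rfl fun a _ => ?_
    rw [Fintype.sum_prod_type]
  have R : (∑ U : Fin (N+3), ∑ V : Fin (N+3),
        if (U:ℕ) < (V:ℕ) then (∑ b : Fin (N+1), F U V b) else 0)
      = ∑ y ∈ (univ.filter
          (fun y : Fin (N+3) × Fin (N+3) × Fin (N+1) => (y.1:ℕ) < (y.2.1:ℕ))),
          F y.1 y.2.1 y.2.2 := by
    rw [Finset.sum_filter, Fintype.sum_prod_type]
    refine Finset.sum_congr rfl fun U _ => ?_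
    rw [Fintype.sum_prod_type]
    refine Finset.sum_congr rfl fun V _ => ?_
    split <;> simp
  rw [L, R]
  refine Finset.sum_nbij'
    (i := fun x =>
      ((finmk (if (x.2.1:ℕ) < (x.1:ℕ) then (x.2.1:ℕ) else (x.2.1:ℕ)+1) : Fin (N+3)),
       (finmk (if (x.2.2:ℕ) < (x.1:ℕ) then (x.2.2:ℕ) else (x.2.2:ℕ)+1) : Fin (N+3)),
       (finmk ((x.1:ℕ) - (if (x.2.1:ℕ) < (x.1:ℕ) then 1 else 0)
          - (if (x.2.2:ℕ) < (x.1:ℕ) then 1 else 0)) : Fin (N+1))))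
    (j := fun y =>
      ((finmk (if (y.2.2:ℕ) < (y.1:ℕ) then (y.2.2:ℕ)
          else if (y.2.2:ℕ)+1 < (y.2.1:ℕ) then (y.2.2:ℕ)+1 else (y.2.2:ℕ)+2) : Fin (N+3)),
       (finmk (if (y.1:ℕ) < (if (y.2.2:ℕ) < (y.1:ℕ) then (y.2.2:ℕ)
            else if (y.2.2:ℕ)+1 < (y.2.1:ℕ) then (y.2.2:ℕ)+1 else (y.2.2:ℕ)+2)
          then (y.1:ℕ) else (y.1:ℕ)-1) : Fin (N+2)),
       (finmk (if (y.2.1:ℕ) < (if (y.2.2:ℕ) < (y.1:ℕ) then (y.2.2:ℕ)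
            else if (y.2.2:ℕ)+1 < (y.2.1:ℕ) then (y.2.2:ℕ)+1 else (y.2.2:ℕ)+2)
          then (y.2.1:ℕ) else (y.2.1:ℕ)-1) : Fin (N+2))))
    ?_ ?_ ?_ ?_ ?_
  · rintro ⟨a, u, v⟩ hx
    simp only [Finset.mem_filter, Finset.mem_univ, true_and] at hx ⊢
    have := a.isLt; have := u.isLt; have := v.isLt
    simp only [finmk_val]
    split_ifs <;> omega
  · rintro ⟨U, V, b⟩ hy
    simp only [Finset.mem_filter, Finset.mem_univ, true_and] at hy ⊢
    have := U.isLt; have := V.isLt; have := b.isLt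
    simp only [finmk_val]
    split_ifs <;> omega
  · rintro ⟨a, u, v⟩ hx
    simp only [Finset.mem_filter, Finset.mem_univ, true_and] at hx
    have := a.isLt; have := u.isLt; have := v.isLt
    simp only [Prod.mk.injEq, Fin.ext_iff, finmk_val]
    refine ⟨?_, ?_, ?_⟩ <;> (split_ifs <;> omega)
  · rintro ⟨U, V, b⟩ hy
    simp only [Finset.mem_filter, Finset.mem_univ, true_and] at hy
    have := U.isLt; have := V.isLt; have := b.isLt
    simp only [Prod.mk.injEq, Fin.ext_iff, finmk_val]
    refine ⟨?_, ?_, ?_⟩ <;> (split_ifs <;> omega)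
  · rintro ⟨a, u, v⟩ hx
    simp only [Finset.mem_filter, Finset.mem_univ, true_and] at hx
    exact hc a u v hx

section
variable {K : Type*} [Field K] {g : Type*} [LieRing g] [LieAlgebra K g]

def dl {N : ℕ} (X : Fin (N+1) → g) (u : ℕ) : Fin N → g :=
  fun t => X ⟨if (t:ℕ) < u then (t:ℕ) else (t:ℕ)+1, by have := t.isLt; split <;> omega⟩

def dl2 {N : ℕ} (X : Fin (N+2) → g) (u v : ℕ) : Fin N → g :=
  fun t => X ⟨if (t:ℕ) < u then (t:ℕ) else if (t:ℕ)+1 < v then (t:ℕ)+1 else (t:ℕ)+2,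
    by have := t.isLt; split <;> [omega; split <;> omega]⟩

def w2 (μ : g → g → K) {N : ℕ} (ψ : (Fin N → g) → K) : (Fin (N+2) → g) → K :=
  fun X => ∑ u : Fin (N+2), ∑ v : Fin (N+2),
    if (u:ℕ) < (v:ℕ) then ((-1:K)^((u:ℕ)+(v:ℕ))) * μ (X u) (X v) * ψ (dl2 X (u:ℕ) (v:ℕ))
    else 0

lemma val_sA {n : ℕ} (p : Fin (n+1)) (t : Fin n) :
    ((p.succAbove t : Fin (n+1)) : ℕ) = if (t:ℕ) < (p:ℕ) then (t:ℕ) else (t:ℕ)+1 := by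
  simp only [Fin.succAbove, Fin.lt_def, Fin.coe_castSucc]
  split <;> simp [Fin.val_succ]

lemma comp_sA {N : ℕ} (X : Fin (N+1) → g) (p : Fin (N+1)) :
    X ∘ p.succAbove = dl X (p:ℕ) := by
  funext t
  exact congrArg X (Fin.ext (val_sA p t))

lemma dl_dl {N : ℕ} (X : Fin (N+2) → g) (i j : ℕ) (h : i ≤ j) :
    dl (dl X i) j = dl2 X i (j+1) := by
  funext t
  simp only [dl, dl2]
  congr 1
  simp only [Fin.mk.injEq]
  split_ifs <;> omega

lemma cons_mk {N : ℕ} (B : g) (Z : Fin N → g) (k : ℕ) (h : k < N+1) :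
    (Fin.cons B Z : Fin (N+1) → g) ⟨k, h⟩
      = if hk : 0 < k then Z ⟨k-1, by omega⟩ else B := by
  cases k with
  | zero =>
    rw [dif_neg (by omega)]
    exact Fin.cons_zero _ _
  | succ m =>
    rw [dif_pos (by omega)]
    have h2 : (⟨m+1, h⟩ : Fin (N+1)) = Fin.succ ⟨m, by omega⟩ := rfl
    rw [h2, Fin.cons_succ]
    congr 1

lemma dl_cons_zero {N : ℕ} (B : g) (Z : Fin N → g) :
    dl (Fin.cons B Z : Fin (N+1) → g) 0 = Z := by
  funext t
  simp only [dl, Nat.not_lt_zero, if_false]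
  rw [cons_mk _ _ _ _, dif_pos (by omega)]
  congr 1

lemma dl_cons_succ {N : ℕ} (B : g) (Z : Fin (N+1) → g) (b : ℕ) :
    dl (Fin.cons B Z : Fin (N+2) → g) (b+1) = Fin.cons B (dl Z b) := by
  funext t
  induction t using Fin.cases with
  | zero =>
    simp only [dl, Fin.val_zero, Fin.cons_zero, Nat.zero_lt_succ, if_true]
    rw [cons_mk _ _ _ _, dif_neg (by omega)]
  | succ s =>
    simp only [dl, Fin.val_succ, Fin.cons_succ, cons_mk]
    rw [dif_pos (by split <;> omega)]
    congr 1
    simp only [Fin.mk.injEq]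
    split_ifs <;> omega

/-- Bridge: the CE differential in "strict pair" normal form. -/
lemma brD {m : ℕ} (ψ : (Fin (m+1) → g) → K) (X : Fin (m+2) → g) :
    ceD0 (m+1) ψ X = ∑ u : Fin (m+2), ∑ v : Fin (m+2),
      if (u:ℕ) < (v:ℕ) then
        ((-1:K)^((u:ℕ)+(v:ℕ))) * ψ (Fin.cons ⁅X u, X v⁆ (dl2 X (u:ℕ) (v:ℕ))) else 0 := by
  show (∑ i : Fin (m+2), ∑ j : Fin (m+1),
      if (i:ℕ) ≤ (j:ℕ) then
        ((-1:ℤ)^((i:ℕ)+((i.succAbove j : Fin (m+2)):ℕ))) •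
          ψ (Fin.cons ⁅X i, X (i.succAbove j)⁆ ((X ∘ i.succAbove) ∘ j.succAbove))
      else 0) = _
  refine Finset.sum_congr rfl fun i _ => ?_
  conv_rhs => rw [Fin.sum_univ_succ]
  rw [if_neg (by simp), zero_add]
  refine Finset.sum_congr rfl fun j _ => ?_
  by_cases h : (i:ℕ) ≤ (j:ℕ)
  · rw [if_pos h, if_pos (by simp [Fin.val_succ, Nat.lt_succ_iff, h])]
    have hsA : i.succAbove j = j.succ :=
      Fin.succAbove_of_le_castSucc i j (by rwa [Fin.le_def, Fin.coe_castSucc])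
    rw [hsA, comp_sA X i, comp_sA (dl X (i:ℕ)) j, dl_dl X (i:ℕ) (j:ℕ) h]
    rw [zsmul_eq_mul]
    push_cast
    rw [Fin.val_succ]
  · rw [if_neg h, if_neg (by simp [Fin.val_succ, Nat.lt_succ_iff, h])]


/-- Commutation of `wedge1` past `w2`. -/
lemma L2 {N : ℕ} (θ : Module.Dual K g) (μ : g → g → K) (ψ : (Fin N → g) → K) :
    wedge1 θ (w2 μ ψ) = w2 μ (wedge1 θ ψ) := by
  funext X
  have hL : wedge1 θ (w2 μ ψ) X
      = ∑ a : Fin (N+3), ∑ u : Fin (N+2), ∑ v : Fin (N+2),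
          if (u:ℕ) < (v:ℕ) then
            ((-1:K)^((a:ℕ)+(u:ℕ)+(v:ℕ)))
              * (θ (X a) * μ (dl X (a:ℕ) u) (dl X (a:ℕ) v)
                  * ψ (dl2 (dl X (a:ℕ)) (u:ℕ) (v:ℕ)))
          else 0 := by
    simp only [wedge1, comp_sA, w2, Finset.mul_sum]
    refine Finset.sum_congr rfl fun a _ => ?_
    refine Finset.sum_congr rfl fun u _ => ?_
    refine Finset.sum_congr rfl fun v _ => ?_
    split_ifs
    · ring
    · ring
  have hR : w2 μ (wedge1 θ ψ) X
      = ∑ U : Fin (N+3), ∑ V : Fin (N+3),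
          if (U:ℕ) < (V:ℕ) then
            (∑ b : Fin (N+1),
              ((-1:K)^((U:ℕ)+(V:ℕ)+(b:ℕ)))
                * (θ (dl2 X (U:ℕ) (V:ℕ) b) * μ (X U) (X V)
                    * ψ (dl (dl2 X (U:ℕ) (V:ℕ)) (b:ℕ))))
          else 0 := by
    simp only [w2, wedge1, comp_sA]
    refine Finset.sum_congr rfl fun U _ => ?_
    refine Finset.sum_congr rfl fun V _ => ?_
    split_ifs
    · rw [Finset.mul_sum]
      refine Finset.sum_congr rfl fun b _ => ?_
      ring
    · rfl
  rw [hL, hR]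
  refine tri _ _ ?_
  intro a u v huv
  have ha := a.isLt; have hu := u.isLt; have hv := v.isLt
  have h1 : dl X (a:ℕ) u
      = X (finmk (if (u:ℕ) < (a:ℕ) then (u:ℕ) else (u:ℕ)+1) : Fin (N+3)) := by
    simp only [dl]
    exact congrArg X (Fin.ext (by simp only [finmk_val]; split_ifs <;> omega))
  have h2 : dl X (a:ℕ) v
      = X (finmk (if (v:ℕ) < (a:ℕ) then (v:ℕ) else (v:ℕ)+1) : Fin (N+3)) := by
    simp only [dl]
    exact congrArg X (Fin.ext (by simp only [finmk_val]; split_ifs <;> omega))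
  have h3 : dl2 X ((finmk (if (u:ℕ) < (a:ℕ) then (u:ℕ) else (u:ℕ)+1) : Fin (N+3)):ℕ)
        ((finmk (if (v:ℕ) < (a:ℕ) then (v:ℕ) else (v:ℕ)+1) : Fin (N+3)):ℕ)
        (finmk ((a:ℕ) - (if (u:ℕ) < (a:ℕ) then 1 else 0)
          - (if (v:ℕ) < (a:ℕ) then 1 else 0)) : Fin (N+1))
      = X a := by
    simp only [dl2, finmk_val]
    exact congrArg X (Fin.ext (by simp only []; split_ifs <;> omega))
  have h4 : dl2 (dl X (a:ℕ)) (u:ℕ) (v:ℕ)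
      = dl (dl2 X ((finmk (if (u:ℕ) < (a:ℕ) then (u:ℕ) else (u:ℕ)+1) : Fin (N+3)):ℕ)
            ((finmk (if (v:ℕ) < (a:ℕ) then (v:ℕ) else (v:ℕ)+1) : Fin (N+3)):ℕ))
          ((finmk ((a:ℕ) - (if (u:ℕ) < (a:ℕ) then 1 else 0)
            - (if (v:ℕ) < (a:ℕ) then 1 else 0)) : Fin (N+1)):ℕ) := by
    funext t
    have ht := t.isLt
    simp only [dl, dl2, finmk_val]
    exact congrArg X (Fin.ext (by simp only []; split_ifs <;> omega))
  rw [h1, h2, h3, h4]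
  congr 1
  exact np (by simp only [finmk_val]; split_ifs <;> omega)



lemma L1succ {M : ℕ} (θ : Module.Dual K g) (ψ : (Fin (M+1) → g) → K) :
    wedge1 θ (ceD0 (M+1) ψ) = w2 (fun x y => θ ⁅x,y⁆) ψ - ceD0 (M+1+1) (wedge1 θ ψ) := by
    funext X
    rw [Pi.sub_apply, eq_sub_iff_add_eq]
    have hA : wedge1 θ (ceD0 (M+1) ψ) X
        = ∑ a : Fin (M+3), ∑ u : Fin (M+2), ∑ v : Fin (M+2),
            if (u:ℕ) < (v:ℕ) then
              ((-1:K)^((a:ℕ)+(u:ℕ)+(v:ℕ)))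
                * (θ (X a)
                    * ψ (Fin.cons ⁅dl X (a:ℕ) u, dl X (a:ℕ) v⁆
                        (dl2 (dl X (a:ℕ)) (u:ℕ) (v:ℕ))))
            else 0 := by
      simp only [wedge1, comp_sA, brD, Finset.mul_sum]
      refine Finset.sum_congr rfl fun a _ => ?_
      refine Finset.sum_congr rfl fun u _ => ?_
      refine Finset.sum_congr rfl fun v _ => ?_
      split_ifs
      · ring
      · ring
    have hB : ceD0 (M+2) (wedge1 θ ψ) X
        = (∑ U : Fin (M+3), ∑ V : Fin (M+3),
            if (U:ℕ) < (V:ℕ) then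
              ((-1:K)^((U:ℕ)+(V:ℕ))) * (fun x y => θ ⁅x,y⁆) (X U) (X V)
                * ψ (dl2 X (U:ℕ) (V:ℕ))
            else 0)
          + ∑ U : Fin (M+3), ∑ V : Fin (M+3),
              if (U:ℕ) < (V:ℕ) then
                (∑ b : Fin (M+1),
                  -(((-1:K)^((U:ℕ)+(V:ℕ)+(b:ℕ)))
                    * (θ (dl2 X (U:ℕ) (V:ℕ) b)
                        * ψ (Fin.cons ⁅X U, X V⁆ (dl (dl2 X (U:ℕ) (V:ℕ)) (b:ℕ))))))
              else 0 := by
      rw [brD, ← Finset.sum_add_distrib]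
      refine Finset.sum_congr rfl fun U _ => ?_
      rw [← Finset.sum_add_distrib]
      refine Finset.sum_congr rfl fun V _ => ?_
      split_ifs
      · -- expand the inner wedge1 over the cons tuple
        rw [wedge1, Fin.sum_univ_succ]
        simp only [comp_sA, Fin.val_zero, Fin.val_succ, Fin.cons_zero, Fin.cons_succ,
          pow_zero, one_mul, dl_cons_zero, dl_cons_succ]
        rw [mul_add, Finset.mul_sum]
        congr 1
        · ring
        · refine Finset.sum_congr rfl fun b _ => ?_
          rw [pow_succ]
          ring
      · rw [add_zero]
    rw [hA, hB]
    have key : wedge1 θ (ceD0 (M+1) ψ) X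
        + (∑ U : Fin (M+3), ∑ V : Fin (M+3),
            if (U:ℕ) < (V:ℕ) then
              (∑ b : Fin (M+1),
                -(((-1:K)^((U:ℕ)+(V:ℕ)+(b:ℕ)))
                  * (θ (dl2 X (U:ℕ) (V:ℕ) b)
                      * ψ (Fin.cons ⁅X U, X V⁆ (dl (dl2 X (U:ℕ) (V:ℕ)) (b:ℕ))))))
            else 0) = 0 := by
      rw [hA]
      have htri : (∑ a : Fin (M+3), ∑ u : Fin (M+2), ∑ v : Fin (M+2),
            if (u:ℕ) < (v:ℕ) then
              ((-1:K)^((a:ℕ)+(u:ℕ)+(v:ℕ)))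
                * (θ (X a)
                    * ψ (Fin.cons ⁅dl X (a:ℕ) u, dl X (a:ℕ) v⁆
                        (dl2 (dl X (a:ℕ)) (u:ℕ) (v:ℕ))))
            else 0)
          = ∑ U : Fin (M+3), ∑ V : Fin (M+3),
              if (U:ℕ) < (V:ℕ) then
                (∑ b : Fin (M+1),
                  ((-1:K)^((U:ℕ)+(V:ℕ)+(b:ℕ)))
                    * (θ (dl2 X (U:ℕ) (V:ℕ) b)
                        * ψ (Fin.cons ⁅X U, X V⁆ (dl (dl2 X (U:ℕ) (V:ℕ)) (b:ℕ)))))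
              else 0 := by
        refine tri _ _ ?_
        intro a u v huv
        have ha := a.isLt; have hu := u.isLt; have hv := v.isLt
        have h1 : dl X (a:ℕ) u
            = X (finmk (if (u:ℕ) < (a:ℕ) then (u:ℕ) else (u:ℕ)+1) : Fin (M+3)) := by
          simp only [dl]
          exact congrArg X (Fin.ext (by simp only [finmk_val]; split_ifs <;> omega))
        have h2 : dl X (a:ℕ) v
            = X (finmk (if (v:ℕ) < (a:ℕ) then (v:ℕ) else (v:ℕ)+1) : Fin (M+3)) := by
          simp only [dl]
          exact congrArg X (Fin.ext (by simp only [finmk_val]; split_ifs <;> omega))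
        have h3 : dl2 X ((finmk (if (u:ℕ) < (a:ℕ) then (u:ℕ) else (u:ℕ)+1) : Fin (M+3)):ℕ)
              ((finmk (if (v:ℕ) < (a:ℕ) then (v:ℕ) else (v:ℕ)+1) : Fin (M+3)):ℕ)
              (finmk ((a:ℕ) - (if (u:ℕ) < (a:ℕ) then 1 else 0)
                - (if (v:ℕ) < (a:ℕ) then 1 else 0)) : Fin (M+1))
            = X a := by
          simp only [dl2, finmk_val]
          exact congrArg X (Fin.ext (by simp only []; split_ifs <;> omega))
        have h4 : dl2 (dl X (a:ℕ)) (u:ℕ) (v:ℕ)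
            = dl (dl2 X ((finmk (if (u:ℕ) < (a:ℕ) then (u:ℕ) else (u:ℕ)+1) : Fin (M+3)):ℕ)
                  ((finmk (if (v:ℕ) < (a:ℕ) then (v:ℕ) else (v:ℕ)+1) : Fin (M+3)):ℕ))
                ((finmk ((a:ℕ) - (if (u:ℕ) < (a:ℕ) then 1 else 0)
                  - (if (v:ℕ) < (a:ℕ) then 1 else 0)) : Fin (M+1)):ℕ) := by
          funext t
          have ht := t.isLt
          simp only [dl, dl2, finmk_val]
          exact congrArg X (Fin.ext (by simp only []; split_ifs <;> omega))
        rw [h1, h2, h3, h4]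
        congr 1
        exact np (by simp only [finmk_val]; split_ifs <;> omega)
      rw [htri, ← Finset.sum_add_distrib]
      refine Finset.sum_eq_zero fun U _ => ?_
      rw [← Finset.sum_add_distrib]
      refine Finset.sum_eq_zero fun V _ => ?_
      split_ifs
      · rw [← Finset.sum_add_distrib]
        refine Finset.sum_eq_zero fun b _ => ?_
        ring
      · rw [add_zero]
    rw [hA] at key
    have hw2 : w2 (fun x y => θ ⁅x,y⁆) ψ X
        = ∑ U : Fin (M+3), ∑ V : Fin (M+3),
            if (U:ℕ) < (V:ℕ) then
              ((-1:K)^((U:ℕ)+(V:ℕ))) * (fun x y => θ ⁅x,y⁆) (X U) (X V)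
                * ψ (dl2 X (U:ℕ) (V:ℕ))
            else 0 := rfl
    rw [hw2]
    linear_combination key

lemma L1zero (θ : Module.Dual K g) (ψ : (Fin 0 → g) → K) :
    wedge1 θ (ceD0 0 ψ) = w2 (fun x y => θ ⁅x,y⁆) ψ - ceD0 (0+1) (wedge1 θ ψ) := by
  funext X
  have hψ : ∀ (f h : Fin 0 → g), ψ f = ψ h := fun f h => by
    congr 1; funext t; exact t.elim0
  have hL : wedge1 θ (ceD0 0 ψ) X = 0 := by
    simp [wedge1, ceD0]
  rw [hL, Pi.sub_apply, brD, w2]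
  rw [Fin.sum_univ_two, Fin.sum_univ_two, Fin.sum_univ_two, Fin.sum_univ_two,
    Fin.sum_univ_two, Fin.sum_univ_two]
  simp only [Fin.val_zero, Fin.val_one]
  norm_num
  rw [wedge1, Fin.sum_univ_one]
  simp only [pow_zero, one_mul, Fin.cons_zero]
  rw [hψ ((Fin.cons ⁅X 0, X 1⁆ (dl2 X 0 1) : Fin 1 → g) ∘ (0 : Fin 1).succAbove) (dl2 X 0 1)]
  simp only [Fin.val_zero, pow_zero, one_mul]
  ring

lemma L1 {N : ℕ} (θ : Module.Dual K g) (ψ : (Fin N → g) → K) :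
    wedge1 θ (ceD0 N ψ) = w2 (fun x y => θ ⁅x,y⁆) ψ - ceD0 (N+1) (wedge1 θ ψ) := by
  cases N with
  | zero => exact L1zero θ ψ
  | succ M => exact L1succ θ ψ

end

section
variable {K : Type*} [Field K] {g : Type*} [LieRing g] [LieAlgebra K g]

lemma wedge1_add {n : ℕ} (θ : Module.Dual K g) (φ χ : (Fin n → g) → K) :
    wedge1 θ (φ + χ) = wedge1 θ φ + wedge1 θ χ := by
  funext X
  simp only [wedge1, Pi.add_apply, mul_add, Finset.sum_add_distrib]

lemma wedge1_smul {n : ℕ} (θ : Module.Dual K g) (r : K) (φ : (Fin n → g) → K) :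
    wedge1 θ (r • φ) = r • wedge1 θ φ := by
  funext X
  simp only [wedge1, Pi.smul_apply, smul_eq_mul, Finset.mul_sum]
  refine Finset.sum_congr rfl fun i _ => ?_
  ring

lemma wedge1_zero {n : ℕ} (θ : Module.Dual K g) :
    wedge1 θ (0 : (Fin n → g) → K) = 0 := by
  funext X
  simp [wedge1]

lemma wedge1_sum {n : ℕ} {ι : Type*} (s : Finset ι) (θ : Module.Dual K g)
    (f : ι → ((Fin n → g) → K)) :
    wedge1 θ (∑ i ∈ s, f i) = ∑ i ∈ s, wedge1 θ (f i) := by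
  classical
  induction s using Finset.induction with
  | empty => simp [wedge1_zero]
  | insert _ _ hx ih =>
    rw [Finset.sum_insert hx, Finset.sum_insert hx, wedge1_add, ih]

lemma w2_zero {n : ℕ} (μ : g → g → K) :
    w2 μ (0 : (Fin n → g) → K) = 0 := by
  funext X
  simp [w2]

lemma ceD0_zero (n : ℕ) : ceD0 n (0 : (Fin n → g) → K) = 0 := by
  cases n with
  | zero => rfl
  | succ m =>
    funext X
    simp [ceD0]

lemma wedgeIter_zero : ∀ (c : ℕ) (θ : Fin c → Module.Dual K g) {n : ℕ},
    wedgeIter c θ (0 : (Fin n → g) → K) = 0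
  | 0, θ, n => rfl
  | (c+1), θ, n => by
    show wedge1 (θ 0) (wedgeIter c (θ ∘ Fin.succ) (0 : (Fin n → g) → K)) = 0
    rw [wedgeIter_zero c (θ ∘ Fin.succ), wedge1_zero]

/-- arity adjustment -/
def rz {a b : ℕ} (h : a = b) (ψ : (Fin a → g) → K) : (Fin b → g) → K :=
  fun X => ψ (fun t => X (Fin.cast h t))

lemma rz_zero {a b : ℕ} (h : a = b) : rz (g := g) (K := K) h 0 = 0 := by
  subst h; rfl

lemma rz_add {a b : ℕ} (h : a = b) (φ χ : (Fin a → g) → K) :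
    rz h (φ + χ) = rz h φ + rz h χ := by
  subst h; rfl

lemma rz_sub {a b : ℕ} (h : a = b) (φ χ : (Fin a → g) → K) :
    rz h (φ - χ) = rz h φ - rz h χ := by
  subst h; rfl

lemma rz_neg {a b : ℕ} (h : a = b) (φ : (Fin a → g) → K) :
    rz h (-φ) = -(rz h φ) := by
  subst h; rfl

lemma rz_smul {a b : ℕ} (h : a = b) (r : K) (φ : (Fin a → g) → K) :
    rz h (r • φ) = r • rz h φ := by
  subst h; rfl

lemma wedge1_rz {a b : ℕ} (h : a = b) (θ : Module.Dual K g) (ψ : (Fin a → g) → K) :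
    wedge1 θ (rz h ψ) = rz (by omega : a+1 = b+1) (wedge1 θ ψ) := by
  subst h; rfl

lemma rearr {M : Type*} [AddCommGroup M] (a b s : M) : a - b + s = -b + (a + s) := by
  abel

/-- The master identity: iterated wedge against the CE differential. -/
lemma main : ∀ (c : ℕ) {N : ℕ} (ψ : (Fin N → g) → K) (θ : Fin (c+1) → Module.Dual K g),
    wedgeIter (c+1) θ (ceD0 N ψ)
      = rz (a := (N+(c+1))+1) (b := (N+1)+(c+1)) (by omega)
          (((-1:K)^(c+1)) • ceD0 (N+(c+1)) (wedgeIter (c+1) θ ψ))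
        + rz (a := (N+c)+2) (b := (N+1)+(c+1)) (by omega)
          (∑ i : Fin (c+1), ((-1:K)^(c-(i:ℕ))) •
              w2 (fun x y => θ i ⁅x,y⁆) (wedgeIter c (θ ∘ i.succAbove) ψ)) := by
  intro c
  induction c with
  | zero =>
    intro N ψ θ
    show wedge1 (θ 0) (ceD0 N ψ)
        = ((-1:K)^(0+1)) • ceD0 (N+(0+1)) (wedgeIter (0+1) θ ψ)
          + ∑ i : Fin (0+1), ((-1:K)^(0-(i:ℕ))) •
              w2 (fun x y => θ i ⁅x,y⁆) (wedgeIter 0 (θ ∘ i.succAbove) ψ)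
    rw [L1, Fin.sum_univ_one]
    have e3 : wedgeIter (0+1) θ ψ = wedge1 (θ 0) ψ := rfl
    have e4 : wedgeIter 0 (θ ∘ (0 : Fin 1).succAbove) ψ = ψ := rfl
    rw [e3, e4]
    simp only [zero_add, pow_one, Fin.val_zero, Nat.sub_zero, pow_zero, one_smul, neg_smul]
    rw [sub_eq_neg_add]
  | succ c ih =>
    intro N ψ θ
    -- massage the RHS (target) first
    rw [Fin.sum_univ_succ, Fin.succAbove_zero]
    simp only [Fin.val_zero, Nat.sub_zero, Fin.val_succ, Nat.add_sub_add_right]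
    have hterm : ∀ i : Fin (c+1),
        wedgeIter (c+1) (θ ∘ (Fin.succ i).succAbove) ψ
          = wedge1 (θ 0) (wedgeIter c ((θ ∘ Fin.succ) ∘ i.succAbove) ψ) := by
      intro i
      show wedge1 ((θ ∘ (Fin.succ i).succAbove) 0)
          (wedgeIter c ((θ ∘ (Fin.succ i).succAbove) ∘ Fin.succ) ψ) = _
      rw [show (θ ∘ (Fin.succ i).succAbove) 0 = θ 0 from
            congrArg θ (Fin.succ_succAbove_zero i),
          show (θ ∘ (Fin.succ i).succAbove) ∘ Fin.succ = (θ ∘ Fin.succ) ∘ i.succAbove from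
            funext fun j => congrArg θ (Fin.succ_succAbove_succ i j)]
    have hsumT : (∑ i : Fin (c+1), ((-1:K)^(c-(i:ℕ))) •
          w2 (fun x y => θ (Fin.succ i) ⁅x,y⁆)
            (wedgeIter (c+1) (θ ∘ (Fin.succ i).succAbove) ψ))
        = ∑ i : Fin (c+1), ((-1:K)^(c-(i:ℕ))) •
            w2 (fun x y => (θ ∘ Fin.succ) i ⁅x,y⁆)
              (wedge1 (θ 0) (wedgeIter c ((θ ∘ Fin.succ) ∘ i.succAbove) ψ)) :=
      Finset.sum_congr rfl fun i _ => by rw [hterm i]; rfl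
    rw [hsumT]
    rw [show ((-1:K)^(c+1+1)) = -((-1:K)^(c+1)) from by rw [pow_succ]; ring, neg_smul,
      rz_neg, rz_add]
    -- massage the LHS
    rw [show wedgeIter (c+1+1) θ (ceD0 N ψ)
          = wedge1 (θ 0) (wedgeIter (c+1) (θ ∘ Fin.succ) (ceD0 N ψ)) from rfl]
    rw [ih ψ (θ ∘ Fin.succ), wedge1_add, wedge1_rz, wedge1_rz, wedge1_smul, L1, smul_sub,
      rz_sub, wedge1_sum]
    simp only [wedge1_smul, L2]
    -- now compare pointwise
    funext X
    simp only [rz, Pi.add_apply, Pi.sub_apply, Pi.neg_apply, Pi.smul_apply, smul_eq_mul,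
      Finset.sum_apply]
    have hD : ceD0 ((N+(c+1))+1) (wedge1 (θ 0) (wedgeIter (c+1) (θ ∘ Fin.succ) ψ))
        = ceD0 (N+(c+1+1)) (wedgeIter (c+1+1) θ ψ) := rfl
    rw [hD]
    exact rearr _ _ _
end

/-- The wedge-annihilation filtration is stable under the Chevalley–Eilenberg
differential: `d(F̃^pC^n(g)) ⊆ F̃^pC^{n+1}(g)`. -/
theorem wFilt_d_stable
    (K : Type*) [Field K] [CharZero K]
    (g : Type*) [LieRing g] [LieAlgebra K g] [FiniteDimensional K g]
    (W : Submodule K (Module.Dual K g)) (p : ℤ) (n : ℕ)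
    (ω : AlternatingMap K g K (Fin n)) (hω : ⇑ω ∈ wFilt W p n) :
    ceD0 n ⇑ω ∈ wFilt W p (n + 1) := by
  classical
  simp only [wFilt] at hω ⊢
  by_cases h0 : (n:ℤ) + 1 - p < 0
  · rw [if_pos h0] at hω
    have hz : ⇑ω = 0 := hω
    rw [hz, ceD0_zero]
    split_ifs with h1
    · exact rfl
    · simp only [Set.mem_setOf_eq]
      intro m hm θ hθ
      exact wedgeIter_zero m θ
  · rw [if_neg h0] at hω
    rw [if_neg (by push_cast; omega)]
    simp only [Set.mem_setOf_eq] at hω ⊢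
    intro m' hm' θ hθ
    obtain ⟨m, rfl⟩ : ∃ m, m' = m+1 := ⟨m'-1, by omega⟩
    have hm : (m:ℤ) = (n:ℤ)+1-p := by push_cast at hm' ⊢; omega
    have hvan : ∀ σ : Fin m → Module.Dual K g, (∀ i, σ i ∈ W) → wedgeIter m σ ⇑ω = 0 :=
      fun σ hσ => hω m hm σ hσ
    rw [main m ⇑ω θ]
    have h1 : wedgeIter (m+1) θ ⇑ω = 0 := by
      show wedge1 (θ 0) (wedgeIter m (θ ∘ Fin.succ) ⇑ω) = 0
      rw [hvan (θ ∘ Fin.succ) (fun i => hθ _), wedge1_zero]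
    have h2 : ∀ i : Fin (m+1), wedgeIter m (θ ∘ i.succAbove) ⇑ω = 0 :=
      fun i => hvan _ (fun j => hθ _)
    rw [h1, ceD0_zero]
    simp only [h2, w2_zero, smul_zero, Finset.sum_const_zero, rz_zero, add_zero, zero_add]
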